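/- A p-robust random 0–1 matrix has a perfect matching with high probability: let n ≥ 1, p ∈ (0,1), and let Y = [ξ_{ij}] be a random n×n matrix with entries in {0,1}, drawn from an arbitrary joint distribution, which is p-robust: for every entry (i,j) and every assignment of values a ∈ {0,1} to any collection of entries preceding (i,j) in row-major order (an entry (i',j') precedes (i,j) if i' < i, or i' = i and j' < j) that has positive probability, Pr(ξ_{ij} = 1 | those preceding entries take the values a) ≥ p, and also unconditionally Pr(ξ_{ij} = 1) ≥ p. Then Pr(there exists a permutation σ of {1,…,n} with ξ_{σ(j),j} = 1 for all j) ≥ 1 − (n+1)³·(1−p)^{⌊n/2⌋}. -/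

import Mathlib

open MeasureTheory Finset

/-- **A `p`-robust random 0–1 matrix has a perfect matching with high probability**:
let `μ` be the joint law of a random `n×n` 0–1 matrix (encoded as
`ω : Fin n → Fin n → Bool`) which is `p`-robust: every entry equals `1` with
(conditional) probability at least `p`, given any positive-probability assignment of
values to any collection of entries preceding it in row-major order (and in particular
unconditionally, taking the empty collection).  Then
`Pr(∃ permutation σ with ξ_{σ(j),j} = 1 for all j) ≥ 1 − (n+1)³·(1−p)^{⌊n/2⌋}`. -/
lemma chain_zero (n : ℕ) (p : ℝ) (hp0 : 0 < p) (hp1 : p < 1)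
    (μ : Measure (Fin n → Fin n → Bool)) [IsProbabilityMeasure μ]
    (hrob : ∀ (i j : Fin n) (T : Finset (Fin n × Fin n)),
      (∀ q ∈ T, q.1 < i ∨ (q.1 = i ∧ q.2 < j)) →
      ∀ a : Fin n × Fin n → Bool,
        μ {ω | ∀ q ∈ T, ω q.1 q.2 = a q} ≠ 0 →
        ENNReal.ofReal p * μ {ω | ∀ q ∈ T, ω q.1 q.2 = a q} ≤
          μ ({ω | ω i j = true} ∩ {ω | ∀ q ∈ T, ω q.1 q.2 = a q})) :
    ∀ (N : ℕ) (S : Finset (Fin n × Fin n)), S.card = N →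
      μ {ω | ∀ q ∈ S, ω q.1 q.2 = false} ≤ ENNReal.ofReal ((1 - p) ^ N) := by
  intro N
  induction N with
  | zero =>
    intro S hS
    have : S = ∅ := Finset.card_eq_zero.mp hS
    subst this
    simp
  | succ N ih =>
    intro S hS
    have hne : S.Nonempty := Finset.card_pos.mp (by omega)
    obtain ⟨M, hM, hmax⟩ := S.exists_max_image (fun q => (q.1 : ℕ) * n + (q.2 : ℕ)) hne
    set S' := S.erase M with hS'
    have hprec : ∀ q ∈ S', q.1 < M.1 ∨ (q.1 = M.1 ∧ q.2 < M.2) := by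
      intro q hq
      have hqS : q ∈ S := Finset.mem_of_mem_erase hq
      have hqne : q ≠ M := Finset.ne_of_mem_erase hq
      have hle := hmax q hqS
      rcases Nat.lt_trichotomy (q.1 : ℕ) (M.1 : ℕ) with h | h | h
      · exact Or.inl (Fin.lt_def.mpr h)
      · right
        have h1 : q.1 = M.1 := Fin.ext h
        refine ⟨h1, Fin.lt_def.mpr ?_⟩
        have hne2 : (q.2 : ℕ) ≠ (M.2 : ℕ) := fun he => hqne (Prod.ext h1 (Fin.ext he))
        rw [h] at hle
        omega
      · exfalso
        have h1 : (M.1 : ℕ) * n + n ≤ (q.1 : ℕ) * n := by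
          calc (M.1 : ℕ) * n + n = ((M.1 : ℕ) + 1) * n := by ring
          _ ≤ (q.1 : ℕ) * n := Nat.mul_le_mul_right n h
        have h2 : (M.2 : ℕ) < n := M.2.isLt
        have : (q.1 : ℕ) * n + (q.2 : ℕ) < (q.1 : ℕ) * n :=
          lt_of_le_of_lt hle (lt_of_lt_of_le (Nat.add_lt_add_left h2 _) h1)
        exact absurd this (Nat.not_lt.mpr (Nat.le_add_right _ _))
    have hcard' : S'.card = N := by
      rw [hS', Finset.card_erase_of_mem hM, hS]
      omega
    have hsplitset : {ω : Fin n → Fin n → Bool | ∀ q ∈ S, ω q.1 q.2 = false}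
        = {ω : Fin n → Fin n → Bool | ω M.1 M.2 = false}
          ∩ {ω | ∀ q ∈ S', ω q.1 q.2 = false} := by
      ext ω
      simp only [Set.mem_setOf_eq, Set.mem_inter_iff]
      constructor
      · intro h
        exact ⟨h M hM, fun q hq => h q (Finset.mem_of_mem_erase hq)⟩
      · rintro ⟨h1, h2⟩ q hq
        rcases eq_or_ne q M with rfl | hne
        · exact h1
        · exact h2 q (Finset.mem_erase.mpr ⟨hne, hq⟩)
    have key : μ ({ω : Fin n → Fin n → Bool | ω M.1 M.2 = false}
          ∩ {ω | ∀ q ∈ S', ω q.1 q.2 = false})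
        ≤ ENNReal.ofReal (1 - p) * μ {ω | ∀ q ∈ S', ω q.1 q.2 = false} := by
      by_cases h0 : μ {ω : Fin n → Fin n → Bool | ∀ q ∈ S', ω q.1 q.2 = false} = 0
      · refine le_trans (measure_mono Set.inter_subset_right) ?_
        rw [h0]
        exact zero_le
      · have hr := hrob M.1 M.2 S' hprec (fun _ => false)
        have hr := hr h0
        have hsplit : μ ({ω : Fin n → Fin n → Bool | ω M.1 M.2 = false}
              ∩ {ω | ∀ q ∈ S', ω q.1 q.2 = false})
            + μ ({ω : Fin n → Fin n → Bool | ω M.1 M.2 = true}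
              ∩ {ω | ∀ q ∈ S', ω q.1 q.2 = false})
            = μ {ω : Fin n → Fin n → Bool | ∀ q ∈ S', ω q.1 q.2 = false} := by
          rw [← measure_union ?disj (MeasurableSet.of_discrete)]
          · congr 1
            ext ω
            simp only [Set.mem_union, Set.mem_inter_iff, Set.mem_setOf_eq]
            cases h : ω M.1 M.2 <;> tauto
          case disj =>
            rw [Set.disjoint_left]
            rintro ω ⟨h1, _⟩ ⟨h2, _⟩
            simp_all
        calc μ ({ω : Fin n → Fin n → Bool | ω M.1 M.2 = false}
              ∩ {ω | ∀ q ∈ S', ω q.1 q.2 = false})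
            = μ {ω : Fin n → Fin n → Bool | ∀ q ∈ S', ω q.1 q.2 = false}
              - μ ({ω : Fin n → Fin n → Bool | ω M.1 M.2 = true}
                ∩ {ω | ∀ q ∈ S', ω q.1 q.2 = false}) := by
              rw [← hsplit, ENNReal.add_sub_cancel_right (measure_ne_top μ _)]
          _ ≤ μ {ω : Fin n → Fin n → Bool | ∀ q ∈ S', ω q.1 q.2 = false}
              - ENNReal.ofReal p * μ {ω | ∀ q ∈ S', ω q.1 q.2 = false} :=
              tsub_le_tsub_left hr _
          _ = (1 - ENNReal.ofReal p) * μ {ω | ∀ q ∈ S', ω q.1 q.2 = false} := by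
              rw [ENNReal.sub_mul (fun _ _ => measure_ne_top μ _), one_mul]
          _ = ENNReal.ofReal (1 - p) * μ {ω | ∀ q ∈ S', ω q.1 q.2 = false} := by
              rw [ENNReal.ofReal_sub 1 hp0.le, ENNReal.ofReal_one]
    calc μ {ω : Fin n → Fin n → Bool | ∀ q ∈ S, ω q.1 q.2 = false}
        = μ ({ω : Fin n → Fin n → Bool | ω M.1 M.2 = false}
          ∩ {ω | ∀ q ∈ S', ω q.1 q.2 = false}) := by rw [hsplitset]
      _ ≤ ENNReal.ofReal (1 - p) * μ {ω | ∀ q ∈ S', ω q.1 q.2 = false} := key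
      _ ≤ ENNReal.ofReal (1 - p) * ENNReal.ofReal ((1 - p) ^ N) :=
          mul_le_mul_right (ih S' hcard') _
      _ = ENNReal.ofReal ((1 - p) ^ (N + 1)) := by
          rw [← ENNReal.ofReal_mul (by linarith)]
          congr 1
          ring

-- counting lemma over the reals
lemma count_aux (n a : ℕ) (hn : 1 ≤ n) (ha1 : 1 ≤ a) (han : a ≤ n)
    (q : ℝ) (hq0 : 0 ≤ q) (hq1 : q ≤ 1) (hsmall : (n : ℝ) ^ 2 * q ^ (n / 2) ≤ 1) :
    ((n.choose a : ℝ) * (n.choose (n + 1 - a) : ℝ)) * q ^ (a * (n + 1 - a))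
      ≤ (n : ℝ) ^ 2 * q ^ (n / 2) := by
  set b := n + 1 - a with hb
  set s := min a b with hs
  have hab : a + b = n + 1 := by omega
  have hb1 : 1 ≤ b := by omega
  have hbn : b ≤ n := by omega
  have hs1 : 1 ≤ s := by omega
  -- choose bounds
  have hc1 : n.choose a ≤ n ^ s := by
    rcases le_total a b with h | h
    · calc n.choose a ≤ n ^ a := Nat.choose_le_pow n a
      _ = n ^ s := by rw [hs, min_eq_left h]
    · have h1 : n.choose a = n.choose (b - 1) := by
        rw [← Nat.choose_symm han]
        congr 1
        omega
      calc n.choose a = n.choose (b - 1) := h1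
        _ ≤ n ^ (b - 1) := Nat.choose_le_pow n (b - 1)
        _ ≤ n ^ b := Nat.pow_le_pow_right hn (by omega)
        _ = n ^ s := by rw [hs, min_eq_right h]
  have hc2 : n.choose b ≤ n ^ s := by
    rcases le_total b a with h | h
    · calc n.choose b ≤ n ^ b := Nat.choose_le_pow n b
      _ = n ^ s := by rw [hs, min_eq_right h]
    · have h1 : n.choose b = n.choose (a - 1) := by
        rw [← Nat.choose_symm hbn]
        congr 1
        omega
      calc n.choose b = n.choose (a - 1) := h1
        _ ≤ n ^ (a - 1) := Nat.choose_le_pow n (a - 1)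
        _ ≤ n ^ a := Nat.pow_le_pow_right hn (by omega)
        _ = n ^ s := by rw [hs, min_eq_left h]
  -- exponent bound
  have hexp : s * (n / 2) ≤ a * b := by
    have hmax : n / 2 ≤ max a b := by
      have h1 : a ≤ max a b := le_max_left a b
      have h2 : b ≤ max a b := le_max_right a b
      omega
    calc s * (n / 2) ≤ s * max a b := Nat.mul_le_mul_left s hmax
      _ = a * b := min_mul_max a b
  have hqe : q ^ (a * b) ≤ (q ^ (n / 2)) ^ s := by
    rw [← pow_mul]
    apply pow_le_pow_of_le_one hq0 hq1
    calc n / 2 * s = s * (n / 2) := Nat.mul_comm _ _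
      _ ≤ a * b := hexp
  have hx0 : 0 ≤ (n : ℝ) ^ 2 * q ^ (n / 2) := by positivity
  calc ((n.choose a : ℝ) * (n.choose b : ℝ)) * q ^ (a * b)
      ≤ ((n : ℝ) ^ s * (n : ℝ) ^ s) * (q ^ (n / 2)) ^ s := by
        apply mul_le_mul _ hqe (by positivity) (by positivity)
        have h1 : (n.choose a : ℝ) ≤ (n : ℝ) ^ s := by exact_mod_cast Nat.cast_le.mpr (by exact_mod_cast hc1)
        have h2 : (n.choose b : ℝ) ≤ (n : ℝ) ^ s := by exact_mod_cast Nat.cast_le.mpr (by exact_mod_cast hc2)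
        exact mul_le_mul h1 h2 (by positivity) (by positivity)
    _ = ((n : ℝ) ^ 2 * q ^ (n / 2)) ^ s := by rw [mul_pow, ← pow_mul, ← pow_mul]; ring_nf
    _ ≤ (n : ℝ) ^ 2 * q ^ (n / 2) := pow_le_of_le_one hx0 hsmall (by omega)

theorem probust_matrix_pm_probability
    (n : ℕ) (hn : 1 ≤ n) (p : ℝ) (hp0 : 0 < p) (hp1 : p < 1)
    (μ : Measure (Fin n → Fin n → Bool)) [IsProbabilityMeasure μ]
    -- `μ` is `p`-robust (row-major precedence)
    (hrob : ∀ (i j : Fin n) (T : Finset (Fin n × Fin n)),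
      (∀ q ∈ T, q.1 < i ∨ (q.1 = i ∧ q.2 < j)) →
      ∀ a : Fin n × Fin n → Bool,
        μ {ω | ∀ q ∈ T, ω q.1 q.2 = a q} ≠ 0 →
        ENNReal.ofReal p * μ {ω | ∀ q ∈ T, ω q.1 q.2 = a q} ≤
          μ ({ω | ω i j = true} ∩ {ω | ∀ q ∈ T, ω q.1 q.2 = a q})) :
    ENNReal.ofReal (1 - ((n : ℝ) + 1) ^ 3 * (1 - p) ^ (n / 2)) ≤
      μ {ω | ∃ σ : Equiv.Perm (Fin n), ∀ j, ω (σ j) j = true} := by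
  classical
  set q : ℝ := 1 - p with hqdef
  have hq0 : 0 ≤ q := by simp [hqdef]; linarith
  have hq1 : q ≤ 1 := by simp [hqdef]; linarith
  set E : Set (Fin n → Fin n → Bool) := {ω | ∃ σ : Equiv.Perm (Fin n), ∀ j, ω (σ j) j = true}
    with hE
  by_cases hR : 1 - ((n : ℝ) + 1) ^ 3 * q ^ (n / 2) ≤ 0
  · rw [ENNReal.ofReal_eq_zero.mpr hR]
    exact zero_le
  push_neg at hR
  have hRlt : ((n : ℝ) + 1) ^ 3 * q ^ (n / 2) < 1 := by linarith
  have hsmall : (n : ℝ) ^ 2 * q ^ (n / 2) ≤ 1 := by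
    have h1 : (n : ℝ) ^ 2 ≤ ((n : ℝ) + 1) ^ 3 := by
      have : (0:ℝ) ≤ (n:ℝ) := Nat.cast_nonneg n
      nlinarith
    have h2 : (n : ℝ) ^ 2 * q ^ (n / 2) ≤ ((n : ℝ) + 1) ^ 3 * q ^ (n / 2) :=
      mul_le_mul_of_nonneg_right h1 (by positivity)
    linarith
  -- the family of zero blocks
  set P : Finset (Finset (Fin n) × Finset (Fin n)) :=
    Finset.univ.filter (fun AB => AB.1.card + AB.2.card = n + 1) with hP
  set Z : Finset (Fin n) × Finset (Fin n) → Set (Fin n → Fin n → Bool) :=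
    fun AB => {ω | ∀ qq ∈ AB.1 ×ˢ AB.2, ω qq.1 qq.2 = false} with hZ
  -- König: complement of E is covered
  have hcover : Eᶜ ⊆ ⋃ AB ∈ P, Z AB := by
    intro ω hω
    have hω' : ¬ ∃ σ : Equiv.Perm (Fin n), ∀ j, ω (σ j) j = true := hω
    set t : Fin n → Finset (Fin n) := fun j => Finset.univ.filter (fun i => ω i j = true)
      with ht
    have hall : ¬ ∀ s : Finset (Fin n), s.card ≤ (s.biUnion t).card := by
      intro h
      obtain ⟨f, hinj, hf⟩ := (Finset.all_card_le_biUnion_card_iff_exists_injective t).mp h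
      refine hω' ⟨Equiv.ofBijective f ((Finite.injective_iff_bijective).mp hinj), fun j => ?_⟩
      have := hf j
      simp only [ht, Finset.mem_filter] at this
      exact this.2
    push_neg at hall
    obtain ⟨B₀, hB₀⟩ := hall
    set A₀ : Finset (Fin n) := (B₀.biUnion t)ᶜ with hA₀
    have hcards : A₀.card = n - (B₀.biUnion t).card := by
      rw [hA₀, Finset.card_compl, Fintype.card_fin]
    have hBn : B₀.card ≤ n := by
      have := Finset.card_le_univ B₀
      simpa using this
    have hBU : (B₀.biUnion t).card < B₀.card := hB₀
    obtain ⟨A, hAsub, hAcard⟩ := Finset.exists_subset_card_eq (s := A₀) (n := n + 1 - B₀.card) (by omega)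
    refine Set.mem_iUnion₂.mpr ⟨(A, B₀), ?_, ?_⟩
    · simp only [hP, Finset.mem_filter, Finset.mem_univ, true_and]
      simp only [hAcard]
      omega
    · intro qq hqq
      simp only [Finset.mem_product] at hqq
      obtain ⟨hi, hj⟩ := hqq
      by_contra hcontra
      have htrue : ω qq.1 qq.2 = true := by
        cases h : ω qq.1 qq.2
        · exact absurd h hcontra
        · rfl
      have : qq.1 ∈ B₀.biUnion t := Finset.mem_biUnion.mpr
        ⟨qq.2, hj, by simp [ht, htrue]⟩
      have : qq.1 ∉ A₀ := by simp [hA₀, this]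
      exact this (hAsub hi)
  -- union bound
  have hunion : μ Eᶜ ≤ ∑ AB ∈ P, μ (Z AB) :=
    le_trans (measure_mono hcover) (measure_biUnion_finset_le P Z)
  -- each block
  have hblock : ∀ AB ∈ P, μ (Z AB) ≤ ENNReal.ofReal (q ^ (AB.1.card * AB.2.card)) := by
    intro AB _
    have := chain_zero n p hp0 hp1 μ hrob (AB.1.card * AB.2.card) (AB.1 ×ˢ AB.2)
      (by rw [Finset.card_product])
    exact this
  -- counting
  have hcount : ∑ AB ∈ P, ENNReal.ofReal (q ^ (AB.1.card * AB.2.card))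
      ≤ ENNReal.ofReal (((n : ℝ) + 1) ^ 3 * q ^ (n / 2)) := by
    rw [← ENNReal.ofReal_sum_of_nonneg (fun _ _ => by positivity)]
    apply ENNReal.ofReal_le_ofReal
    have hmaps : ∀ AB ∈ P, AB.1.card ∈ Finset.Icc 1 n := by
      intro AB hAB
      simp only [hP, Finset.mem_filter, Finset.mem_univ, true_and] at hAB
      have h1 : AB.1.card ≤ n := by have := Finset.card_le_univ AB.1; simpa using this
      have h2 : AB.2.card ≤ n := by have := Finset.card_le_univ AB.2; simpa using this
      simp only [Finset.mem_Icc]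
      omega
    rw [← Finset.sum_fiberwise_of_maps_to hmaps]
    have hinner : ∀ a ∈ Finset.Icc 1 n,
        ∑ AB ∈ P.filter (fun AB => AB.1.card = a), q ^ (AB.1.card * AB.2.card)
          ≤ (n : ℝ) ^ 2 * q ^ (n / 2) := by
      intro a ha
      simp only [Finset.mem_Icc] at ha
      have hterm : ∀ AB ∈ P.filter (fun AB => AB.1.card = a),
          q ^ (AB.1.card * AB.2.card) = q ^ (a * (n + 1 - a)) := by
        intro AB hAB
        simp only [Finset.mem_filter, hP, Finset.mem_univ, true_and] at hAB
        obtain ⟨h1, h2⟩ := hAB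
        have h3 : AB.2.card = n + 1 - a := by omega
        rw [h2, h3]
      rw [Finset.sum_congr rfl hterm, Finset.sum_const, nsmul_eq_mul]
      have hcard : (P.filter (fun AB => AB.1.card = a)).card
          ≤ n.choose a * n.choose (n + 1 - a) := by
        have hsub : P.filter (fun AB => AB.1.card = a)
            ⊆ (Finset.univ.powersetCard a) ×ˢ (Finset.univ.powersetCard (n + 1 - a)) := by
          intro AB hAB
          simp only [Finset.mem_filter, hP, Finset.mem_univ, true_and] at hAB
          obtain ⟨h1, h2⟩ := hAB
          simp only [Finset.mem_product, Finset.mem_powersetCard]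
          exact ⟨⟨Finset.subset_univ _, h2⟩, Finset.subset_univ _, by omega⟩
        calc (P.filter (fun AB => AB.1.card = a)).card
            ≤ ((Finset.univ.powersetCard a) ×ˢ (Finset.univ.powersetCard (n + 1 - a))).card :=
              Finset.card_le_card hsub
          _ = n.choose a * n.choose (n + 1 - a) := by
              rw [Finset.card_product, Finset.card_powersetCard, Finset.card_powersetCard]
              simp
      calc ((P.filter (fun AB => AB.1.card = a)).card : ℝ) * q ^ (a * (n + 1 - a))
          ≤ ((n.choose a : ℝ) * (n.choose (n + 1 - a) : ℝ)) * q ^ (a * (n + 1 - a)) := by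
            apply mul_le_mul_of_nonneg_right _ (by positivity)
            exact_mod_cast hcard
        _ ≤ (n : ℝ) ^ 2 * q ^ (n / 2) := count_aux n a hn ha.1 ha.2 q hq0 hq1 hsmall
    calc ∑ a ∈ Finset.Icc 1 n, ∑ AB ∈ P.filter (fun AB => AB.1.card = a),
          q ^ (AB.1.card * AB.2.card)
        ≤ ∑ a ∈ Finset.Icc 1 n, (n : ℝ) ^ 2 * q ^ (n / 2) := Finset.sum_le_sum hinner
      _ = (n : ℝ) * ((n : ℝ) ^ 2 * q ^ (n / 2)) := by
          rw [Finset.sum_const, Nat.card_Icc, nsmul_eq_mul]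
          simp
      _ ≤ ((n : ℝ) + 1) ^ 3 * q ^ (n / 2) := by
          have h0 : (0:ℝ) ≤ q ^ (n / 2) := by positivity
          have hnn : (0:ℝ) ≤ (n:ℝ) := Nat.cast_nonneg n
          nlinarith
  have hcompl : μ Eᶜ ≤ ENNReal.ofReal (((n : ℝ) + 1) ^ 3 * q ^ (n / 2)) :=
    hunion.trans ((Finset.sum_le_sum hblock).trans hcount)
  have hmeasE : MeasurableSet E := .of_discrete
  have hEeq : μ E = 1 - μ Eᶜ := by
    conv_lhs => rw [← compl_compl E]
    rw [prob_compl_eq_one_sub hmeasE.compl]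
  rw [hEeq, ENNReal.ofReal_sub 1 (by positivity), ENNReal.ofReal_one]
  exact tsub_le_tsub_left hcompl 1
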